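/- Let n ≥ 1 and let Φ ⊆ BC_n be a root subsystem. Then there exist a sign function ε : {1,…,n} → {1,−1}, a partition P of {1,…,n}, and a type assignment t from P to {A, D, B, C, BC}, such that D_ε(Φ) = ⋃_{B∈P} Φ_{t(B)}(B), where D_ε is the linear automorphism of ℝ^n with D_ε(e_i) = ε(i)·e_i. -/

import Mathlib

open Finset

noncomputable section

/-- Standard basis vector `e i` of `ℝ^n`. -/
def E {n : ℕ} (i : Fin n) : Fin n → ℝ := Pi.single i 1

/-- Standard inner product on `ℝ^n`. -/
def dot {n : ℕ} (v w : Fin n → ℝ) : ℝ := ∑ i, v i * w i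

/-- Reflection across the hyperplane orthogonal to `α`. -/
def reflRoot {n : ℕ} (α v : Fin n → ℝ) : Fin n → ℝ := v - (2 * dot v α / dot α α) • α

/-- The root system `A_{n-1}`. -/
def Aset (n : ℕ) : Set (Fin n → ℝ) := {α | ∃ i j : Fin n, i ≠ j ∧ α = E i - E j}

/-- The root system `D_n`. -/
def Dset (n : ℕ) : Set (Fin n → ℝ) :=
  {α | ∃ i j : Fin n, i ≠ j ∧ (α = E i - E j ∨ α = E i + E j ∨ α = -(E i + E j))}

/-- The root system `B_n`. -/
def Bset (n : ℕ) : Set (Fin n → ℝ) := Dset n ∪ {α | ∃ i : Fin n, α = E i ∨ α = -E i}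

/-- The root system `C_n`. -/
def Cset (n : ℕ) : Set (Fin n → ℝ) :=
  Dset n ∪ {α | ∃ i : Fin n, α = (2:ℝ) • E i ∨ α = -((2:ℝ) • E i)}

/-- The nonreduced root system `BC_n`. -/
def BCset (n : ℕ) : Set (Fin n → ℝ) := Bset n ∪ Cset n

/-- Types of classical irreducible root (sub)systems. -/
inductive RType | A | D | B | C | BC
deriving DecidableEq

/-- Type-`A` system on a block `B`. -/
def PhiA {n : ℕ} (B : Finset (Fin n)) : Set (Fin n → ℝ) :=
  {α | ∃ i ∈ B, ∃ j ∈ B, i ≠ j ∧ α = E i - E j}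

/-- Type-`D` system on a block `B`. -/
def PhiD {n : ℕ} (B : Finset (Fin n)) : Set (Fin n → ℝ) :=
  {α | ∃ i ∈ B, ∃ j ∈ B, i ≠ j ∧ (α = E i - E j ∨ α = E i + E j ∨ α = -(E i + E j))}

/-- Type-`B` system on a block `B`. -/
def PhiB {n : ℕ} (B : Finset (Fin n)) : Set (Fin n → ℝ) :=
  PhiD B ∪ {α | ∃ i ∈ B, α = E i ∨ α = -E i}

/-- Type-`C` system on a block `B`. -/
def PhiC {n : ℕ} (B : Finset (Fin n)) : Set (Fin n → ℝ) :=
  PhiD B ∪ {α | ∃ i ∈ B, α = (2:ℝ) • E i ∨ α = -((2:ℝ) • E i)}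

/-- Type-`BC` system on a block `B`. -/
def PhiBC {n : ℕ} (B : Finset (Fin n)) : Set (Fin n → ℝ) := PhiB B ∪ PhiC B

/-- The classical system of the given type on a block. -/
def PhiOf {n : ℕ} : RType → Finset (Fin n) → Set (Fin n → ℝ)
  | RType.A => PhiA
  | RType.D => PhiD
  | RType.B => PhiB
  | RType.C => PhiC
  | RType.BC => PhiBC

namespace S9

variable {n : ℕ}

/-! ### Signs -/

def Sgn (s : ℝ) : Prop := s = 1 ∨ s = -1

lemma Sgn.one : Sgn (1:ℝ) := Or.inl rfl
lemma Sgn.negone : Sgn (-1:ℝ) := Or.inr rfl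
lemma Sgn.neg {s : ℝ} (h : Sgn s) : Sgn (-s) := by rcases h with rfl|rfl <;> simp [Sgn]
lemma Sgn.mul {s t : ℝ} (h : Sgn s) (h' : Sgn t) : Sgn (s*t) := by
  rcases h with rfl|rfl <;> rcases h' with rfl|rfl <;> simp [Sgn]
lemma Sgn.sq {s : ℝ} (h : Sgn s) : s * s = 1 := by rcases h with rfl|rfl <;> norm_num
lemma Sgn.ne {s : ℝ} (h : Sgn s) : s ≠ 0 := by rcases h with rfl|rfl <;> norm_num

lemma sgn_cases {c d : ℝ} (h : Sgn c) (h' : Sgn d) : c = d ∨ c = -d := by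
  rcases h with rfl|rfl <;> rcases h' with rfl|rfl <;> norm_num

/-! ### dot product and reflections -/

lemma E_apply (i m : Fin n) : E i m = if m = i then 1 else 0 := Pi.single_apply i 1 m

lemma dot_smulE_smulE (a b : ℝ) (i j : Fin n) :
    dot (a • E i) (b • E j) = if i = j then a*b else 0 := by
  unfold dot E
  simp [Pi.single_apply, ite_and, mul_ite, Finset.sum_ite_eq]
  split_ifs with h1 h2 h2 <;> simp_all

lemma dot_add_left (u v w : Fin n → ℝ) : dot (u+v) w = dot u w + dot v w := by
  simp [dot, add_mul, Finset.sum_add_distrib]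
lemma dot_add_right (u v w : Fin n → ℝ) : dot u (v+w) = dot u v + dot u w := by
  simp [dot, mul_add, Finset.sum_add_distrib]

/-- reflect mixed root (i,j) across mixed root (j,k) -/
lemma refl_mm {i j k : Fin n} (hij : i ≠ j) (hjk : j ≠ k) (hik : i ≠ k)
    (s t u v : ℝ) (hu : Sgn u) (hv : Sgn v) :
    reflRoot (u•E j + v•E k) (s•E i + t•E j) = s•E i + (-(t*u*v))•E k := by
  have h1 : dot (s•E i + t•E j) (u•E j + v•E k) = t*u := by
    simp [dot_add_left, dot_add_right, dot_smulE_smulE, hij, hjk, hik]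
  have h2 : dot (u•E j + v•E k) (u•E j + v•E k) = 2 := by
    simp [dot_add_left, dot_add_right, dot_smulE_smulE, hjk, hjk.symm]
    rcases hu with rfl|rfl <;> rcases hv with rfl|rfl <;> norm_num
  unfold reflRoot
  rw [h1, h2]
  funext m
  simp only [Pi.sub_apply, Pi.add_apply, Pi.smul_apply, E_apply, smul_eq_mul]
  rcases hu with rfl|rfl <;> rcases hv with rfl|rfl <;>
    split_ifs <;> simp_all <;> ring

/-- reflect mixed root (i,j) across short/long root at i: `w = 1` short, `w = 2` long. -/
lemma refl_sm {i j : Fin n} (hij : i ≠ j) (s t u w : ℝ) (hu : Sgn u) (hw : w = 1 ∨ w = 2) :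
    reflRoot (u•(w•E i)) (s•E i + t•E j) = (-s)•E i + t•E j := by
  have h1 : dot (s•E i + t•E j) (u•(w•E i)) = s*(u*w) := by
    rw [smul_smul]
    simp [dot_add_left, dot_add_right, dot_smulE_smulE, hij, hij.symm]
  have h2 : dot (u•(w•E i)) (u•(w•E i)) = w*w := by
    rw [smul_smul]
    simp [dot_smulE_smulE]
    rcases hu with rfl|rfl <;> ring
  unfold reflRoot
  rw [h1, h2, smul_smul]
  funext m
  simp only [Pi.sub_apply, Pi.add_apply, Pi.smul_apply, E_apply, smul_eq_mul]
  rcases hu with rfl|rfl <;> rcases hw with rfl|rfl <;>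
    split_ifs <;> simp_all <;> ring

/-- reflect short/long root at i across mixed root (i,j) -/
lemma refl_ms {i j : Fin n} (hij : i ≠ j) (s u v w : ℝ) (hu : Sgn u) (hv : Sgn v) :
    reflRoot (u•E i + v•E j) (s•(w•E i)) = (-(s*u*v))•(w•E j) := by
  have h1 : dot (s•(w•E i)) (u•E i + v•E j) = s*w*u := by
    rw [smul_smul]
    simp [dot_add_left, dot_add_right, dot_smulE_smulE, hij]
  have h2 : dot (u•E i + v•E j) (u•E i + v•E j) = 2 := by
    simp [dot_add_left, dot_add_right, dot_smulE_smulE, hij, hij.symm]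
    rcases hu with rfl|rfl <;> rcases hv with rfl|rfl <;> norm_num
  unfold reflRoot
  rw [h1, h2, smul_smul, smul_smul]
  funext m
  simp only [Pi.sub_apply, Pi.add_apply, Pi.smul_apply, E_apply, smul_eq_mul]
  rcases hu with rfl|rfl <;> rcases hv with rfl|rfl <;>
    split_ifs <;> simp_all <;> ring

lemma refl_self (α : Fin n → ℝ) (h : dot α α ≠ 0) : reflRoot α α = -α := by
  unfold reflRoot
  rw [mul_div_assoc, div_self h]
  funext m; simp; ring

/-! ### case analysis in BC -/

lemma bc_cases {α : Fin n → ℝ} (h : α ∈ BCset n) :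
    (∃ s i, Sgn s ∧ α = s • ((1:ℝ) • E i)) ∨
    (∃ s i, Sgn s ∧ α = s • ((2:ℝ) • E i)) ∨
    (∃ s t i j, Sgn s ∧ Sgn t ∧ i ≠ j ∧ α = s • E i + t • E j) := by
  have hD : α ∈ Dset n → (∃ s t i j, Sgn s ∧ Sgn t ∧ i ≠ j ∧ α = s • E i + t • E j) := by
    rintro ⟨i, j, hij, (rfl|rfl|rfl)⟩
    · exact ⟨1, -1, i, j, Or.inl rfl, Or.inr rfl, hij, by module⟩
    · exact ⟨1, 1, i, j, Or.inl rfl, Or.inl rfl, hij, by module⟩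
    · exact ⟨-1, -1, i, j, Or.inr rfl, Or.inr rfl, hij, by module⟩
  rcases h with (h|⟨i, (rfl|rfl)⟩)|(h|⟨i, (rfl|rfl)⟩)
  · exact Or.inr (Or.inr (hD h))
  · exact Or.inl ⟨1, i, Or.inl rfl, by module⟩
  · exact Or.inl ⟨-1, i, Or.inr rfl, by module⟩
  · exact Or.inr (Or.inr (hD h))
  · exact Or.inr (Or.inl ⟨1, i, Or.inl rfl, by module⟩)
  · exact Or.inr (Or.inl ⟨-1, i, Or.inr rfl, by module⟩)

lemma dot_self_ne {α : Fin n → ℝ} (h : α ∈ BCset n) : dot α α ≠ 0 := by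
  rcases bc_cases h with ⟨s,i,hs,rfl⟩ | ⟨s,i,hs,rfl⟩ | ⟨s,t,i,j,hs,ht,hij,rfl⟩
  · rw [smul_smul, dot_smulE_smulE]
    rcases hs with rfl|rfl <;> norm_num
  · rw [smul_smul, dot_smulE_smulE]
    rcases hs with rfl|rfl <;> norm_num
  · simp [dot_add_left, dot_add_right, dot_smulE_smulE, hij, hij.symm]
    rcases hs with rfl|rfl <;> rcases ht with rfl|rfl <;> norm_num

/-! ### closure lemmas for a root subsystem -/

variable {Φ : Set (Fin n → ℝ)}

/-- mixed root membership -/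
def M (Φ : Set (Fin n → ℝ)) (s t : ℝ) (i j : Fin n) : Prop := s • E i + t • E j ∈ Φ

section closure

variable (hsub : Φ ⊆ BCset n) (hcl : ∀ α ∈ Φ, ∀ β ∈ Φ, reflRoot α β ∈ Φ)
include hsub hcl

lemma neg_mem {α : Fin n → ℝ} (h : α ∈ Φ) : -α ∈ Φ := by
  have := hcl α h α h
  rwa [refl_self α (dot_self_ne (hsub h))] at this

lemma Mneg {s t : ℝ} {i j : Fin n} (h : M Φ s t i j) : M Φ (-s) (-t) i j := by
  have := neg_mem hsub hcl h
  have e : -(s • E i + t • E j) = (-s) • E i + (-t) • E j := by module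
  rwa [e] at this

lemma Msame {s t u v : ℝ} {i j : Fin n} (h : M Φ s t i j)
    (hs : Sgn s) (ht : Sgn t) (hu : Sgn u) (hv : Sgn v)
    (heq : s * t = u * v) : M Φ u v i j := by
  rcases hs with rfl|rfl <;> rcases ht with rfl|rfl <;>
    rcases hu with rfl|rfl <;> rcases hv with rfl|rfl <;>
    first
      | exact h
      | exact Mneg hsub hcl h
      | (have := Mneg hsub hcl h; norm_num at this; exact this)
      | exact absurd heq (by norm_num)

lemma Mtrans {s t u v : ℝ} {i j k : Fin n} (hij : i ≠ j) (hjk : j ≠ k) (hik : i ≠ k)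
    (hu : Sgn u) (hv : Sgn v) (h1 : M Φ s t i j) (h2 : M Φ u v j k) :
    M Φ s (-(t*u*v)) i k := by
  have := hcl _ h2 _ h1
  rwa [refl_mm hij hjk hik s t u v hu hv] at this

lemma Mflip {s t u w : ℝ} {i j : Fin n} (hij : i ≠ j) (hu : Sgn u) (hw : w = 1 ∨ w = 2)
    (h1 : u•(w•E i) ∈ Φ) (h2 : M Φ s t i j) : M Φ (-s) t i j := by
  have := hcl _ h1 _ h2
  rwa [refl_sm hij s t u w hu hw] at this

lemma Sstep {s u v w : ℝ} {i j : Fin n} (hij : i ≠ j) (hu : Sgn u) (hv : Sgn v)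
    (h1 : s•(w•E i) ∈ Φ) (h2 : M Φ u v i j) : (-(s*u*v))•(w•E j) ∈ Φ := by
  have := hcl _ h2 _ h1
  rwa [refl_ms hij s u v w hu hv] at this

lemma sw_mem {s w : ℝ} {i : Fin n} (hs : Sgn s) (h : s•(w•E i) ∈ Φ) :
    w•E i ∈ Φ ∧ -(w•E i) ∈ Φ := by
  rcases hs with rfl|rfl
  · rw [one_smul] at h
    exact ⟨h, neg_mem hsub hcl h⟩
  · rw [neg_one_smul] at h
    have h' := neg_mem hsub hcl h
    rw [neg_neg] at h'
    exact ⟨h', h⟩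

end closure

/-! ### the graph and its blocks -/

def Rm (Φ : Set (Fin n → ℝ)) (i j : Fin n) : Prop :=
  ∃ s t, Sgn s ∧ Sgn t ∧ M Φ s t i j

lemma Rm_symm : Symmetric (Rm Φ) := by
  rintro i j ⟨s, t, hs, ht, h⟩
  exact ⟨t, s, ht, hs, by rwa [M, add_comm] at h⟩

def r' (Φ : Set (Fin n → ℝ)) (i j : Fin n) : Prop := i ≠ j ∧ Rm Φ i j

open Classical in
def blkΦ (Φ : Set (Fin n → ℝ)) (i : Fin n) : Finset (Fin n) :=
  Finset.univ.filter (fun j => Relation.ReflTransGen (r' Φ) i j)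

lemma mem_blk {i j : Fin n} : j ∈ blkΦ Φ i ↔ Relation.ReflTransGen (r' Φ) i j := by
  classical simp [blkΦ]

lemma self_mem_blk (Φ : Set (Fin n → ℝ)) (i : Fin n) : i ∈ blkΦ Φ i := mem_blk.2 .refl

lemma rtg_symm : Symmetric (Relation.ReflTransGen (r' Φ)) :=
  fun a b h => by
    haveI : Std.Symm (r' Φ) := ⟨fun _ _ ⟨h1, h2⟩ => ⟨h1.symm, Rm_symm h2⟩⟩
    exact Std.Symm.symm a b h

lemma blk_eq {i j : Fin n} (h : j ∈ blkΦ Φ i) : blkΦ Φ j = blkΦ Φ i := by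
  rw [mem_blk] at h
  ext k
  rw [mem_blk, mem_blk]
  exact ⟨fun h' => h.trans h', fun h' => (rtg_symm h).trans h'⟩

lemma rtg_of_mem {i k l : Fin n} (hk : k ∈ blkΦ Φ i) (hl : l ∈ blkΦ Φ i) :
    Relation.ReflTransGen (r' Φ) k l :=
  (rtg_symm (mem_blk.1 hk)).trans (mem_blk.1 hl)

section graph

variable (hsub : Φ ⊆ BCset n) (hcl : ∀ α ∈ Φ, ∀ β ∈ Φ, reflRoot α β ∈ Φ)
include hsub hcl

lemma Rm_comp {i j k : Fin n} (hij : i ≠ j) (hjk : j ≠ k) (hik : i ≠ k)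
    (h1 : Rm Φ i j) (h2 : Rm Φ j k) : Rm Φ i k := by
  obtain ⟨s, t, hs, ht, hM1⟩ := h1
  obtain ⟨u, v, hu, hv, hM2⟩ := h2
  exact ⟨s, -(t*u*v), hs, ((ht.mul hu).mul hv).neg, Mtrans hsub hcl hij hjk hik hu hv hM1 hM2⟩

lemma direct {i j : Fin n} (h : Relation.ReflTransGen (r' Φ) i j) (hne : i ≠ j) :
    Rm Φ i j := by
  induction h with
  | refl => exact absurd rfl hne
  | @tail b c hab hbc ih =>
    by_cases hib : i = b
    · exact hib ▸ hbc.2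
    · exact Rm_comp hsub hcl hib hbc.1 hne (ih hib) hbc.2

end graph

/-! ### block invariants -/

def Cls (Φ : Set (Fin n → ℝ)) (c : ℝ) (i j : Fin n) : Prop :=
  ∃ s t, Sgn s ∧ Sgn t ∧ s * t = c ∧ M Φ s t i j

def hasShort (Φ : Set (Fin n → ℝ)) (S : Finset (Fin n)) : Prop := ∃ i ∈ S, E i ∈ Φ
def hasLong (Φ : Set (Fin n → ℝ)) (S : Finset (Fin n)) : Prop := ∃ i ∈ S, (2:ℝ) • E i ∈ Φ
def hasBoth (Φ : Set (Fin n → ℝ)) (S : Finset (Fin n)) : Prop :=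
  ∃ i ∈ S, ∃ j ∈ S, i ≠ j ∧ Cls Φ 1 i j ∧ Cls Φ (-1) i j

open Classical in
def tfun (Φ : Set (Fin n → ℝ)) (S : Finset (Fin n)) : RType :=
  if hasShort Φ S then (if hasLong Φ S then .BC else .B)
  else if hasLong Φ S then .C
  else if hasBoth Φ S then .D else .A

def baseΦ (Φ : Set (Fin n → ℝ)) (i : Fin n) : Fin n :=
  (blkΦ Φ i).min' ⟨i, self_mem_blk Φ i⟩

open Classical in
def eps (Φ : Set (Fin n → ℝ)) (i : Fin n) : ℝ :=
  if i = baseΦ Φ i then 1 else (if Cls Φ (-1) (baseΦ Φ i) i then 1 else -1)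

lemma eps_sgn (Φ : Set (Fin n → ℝ)) (i : Fin n) : Sgn (eps Φ i) := by
  unfold eps; split_ifs <;> simp [Sgn]

lemma base_mem (Φ : Set (Fin n → ℝ)) (i : Fin n) : baseΦ Φ i ∈ blkΦ Φ i :=
  Finset.min'_mem _ _

lemma base_eq {i j : Fin n} (h : j ∈ blkΦ Φ i) : baseΦ Φ j = baseΦ Φ i := by
  unfold baseΦ
  congr 1
  exact blk_eq h

lemma tfun_spec (Φ : Set (Fin n → ℝ)) (S : Finset (Fin n)) :
    (tfun Φ S = .A ∧ ¬hasShort Φ S ∧ ¬hasLong Φ S ∧ ¬hasBoth Φ S) ∨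
    (tfun Φ S = .D ∧ ¬hasShort Φ S ∧ ¬hasLong Φ S ∧ hasBoth Φ S) ∨
    (tfun Φ S = .B ∧ hasShort Φ S ∧ ¬hasLong Φ S) ∨
    (tfun Φ S = .C ∧ ¬hasShort Φ S ∧ hasLong Φ S) ∨
    (tfun Φ S = .BC ∧ hasShort Φ S ∧ hasLong Φ S) := by
  unfold tfun
  split_ifs with h1 h2 h3 h4 <;> tauto

section main

variable (hsub : Φ ⊆ BCset n) (hcl : ∀ α ∈ Φ, ∀ β ∈ Φ, reflRoot α β ∈ Φ)
include hsub hcl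

/-- all four mixed roots on a pair -/
def allM (Φ : Set (Fin n → ℝ)) (i j : Fin n) : Prop :=
  ∀ s t, Sgn s → Sgn t → M Φ s t i j

omit hsub hcl in
lemma allM_symm {i j : Fin n} (h : allM Φ i j) : allM Φ j i := by
  intro s t hs ht
  have := h t s ht hs
  rwa [M, add_comm] at this

lemma allM_of_two {i j : Fin n} {s t u v : ℝ}
    (hs : Sgn s) (ht : Sgn t) (hu : Sgn u) (hv : Sgn v)
    (h1 : M Φ s t i j) (h2 : M Φ u v i j) (hne : s*t ≠ u*v) : allM Φ i j := by
  intro a b ha hb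
  rcases sgn_cases (ha.mul hb) (hs.mul ht) with he|he
  · exact Msame hsub hcl h1 hs ht ha hb he.symm
  · rcases sgn_cases (hu.mul hv) (hs.mul ht) with he'|he'
    · exact absurd he'.symm hne
    · exact Msame hsub hcl h2 hu hv ha hb (by rw [he', ← he])

lemma prop1 {i j k : Fin n} (hij : i ≠ j) (hjk : j ≠ k) (hik : i ≠ k)
    (hall : allM Φ i j) (hedge : Rm Φ j k) : allM Φ i k := by
  obtain ⟨u, v, hu, hv, hM⟩ := hedge
  have r1 := Mtrans hsub hcl hij hjk hik hu hv (hall 1 1 Sgn.one Sgn.one) hM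
  have r2 := Mtrans hsub hcl hij hjk hik hu hv (hall 1 (-1) Sgn.one Sgn.negone) hM
  refine allM_of_two hsub hcl Sgn.one ((Sgn.one.mul hu).mul hv).neg
    Sgn.one ((Sgn.negone.mul hu).mul hv).neg r1 r2 ?_
  have := hu.ne
  have := hv.ne
  intro h
  rcases hu with rfl|rfl <;> rcases hv with rfl|rfl <;> norm_num at h

/-- spreading `allM` through a block -/
lemma spread {i a b k l : Fin n} (ha : a ∈ blkΦ Φ i) (hb : b ∈ blkΦ Φ i) (hab : a ≠ b)
    (hall : allM Φ a b) (hk : k ∈ blkΦ Φ i) (hl : l ∈ blkΦ Φ i) (hkl : k ≠ l) :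
    allM Φ k l := by
  have step : ∀ x y z : Fin n, x ∈ blkΦ Φ i → y ∈ blkΦ Φ i → z ∈ blkΦ Φ i →
      x ≠ y → z ≠ x → z ≠ y → allM Φ x y → allM Φ x z := by
    intro x y z hx hy hz hxy hzx hzy hxyall
    exact prop1 hsub hcl hxy (fun h => hzy h.symm) (fun h => hzx h.symm) hxyall
      (direct hsub hcl (rtg_of_mem hy hz) (fun h => hzy h.symm))
  by_cases hka : k = a
  · by_cases hlb : l = b
    · rw [hka, hlb]; exact hall
    · rw [hka]
      rw [hka] at hkl
      exact step a b l ha hb hl hab (fun h => hkl h.symm) hlb hall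
  · by_cases hkb : k = b
    · have hall' : allM Φ k a := by rw [hkb]; exact allM_symm hall
      by_cases hla : l = a
      · rw [hla]; exact hall'
      · exact step k a l hk ha hl (hkb ▸ (fun h => hab h.symm)) (fun h => hkl h.symm) hla hall'
    · have h1 : allM Φ a k := step a b k ha hb hk hab hka hkb hall
      have h1' := allM_symm h1
      by_cases hla : l = a
      · rw [hla]; exact h1'
      · exact step k a l hk ha hl hka (fun h => hkl h.symm) hla h1'

/-- In a block which has a short root, a long root, or both classes somewhere,
all mixed roots on all pairs are present. -/
lemma fullD {i k l : Fin n}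
    (hty : hasShort Φ (blkΦ Φ i) ∨ hasLong Φ (blkΦ Φ i) ∨ hasBoth Φ (blkΦ Φ i))
    (hk : k ∈ blkΦ Φ i) (hl : l ∈ blkΦ Φ i) (hkl : k ≠ l) : allM Φ k l := by
  have hpair : ∃ a ∈ blkΦ Φ i, ∃ b ∈ blkΦ Φ i, a ≠ b ∧ allM Φ a b := by
    have gen : ∀ w : ℝ, (w = 1 ∨ w = 2) → (∀ m ∈ blkΦ Φ i, w • E m ∈ Φ →
        ∃ a ∈ blkΦ Φ i, ∃ b ∈ blkΦ Φ i, a ≠ b ∧ allM Φ a b) := by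
      intro w hw m hm hEm
      set p := if m = k then l else k with hp
      have hpmem : p ∈ blkΦ Φ i := by rw [hp]; split_ifs <;> assumption
      have hmp : m ≠ p := by
        rw [hp]; split_ifs with h'
        · rw [h']; exact hkl
        · exact h'
      obtain ⟨s, t, hs, ht, hM⟩ := direct hsub hcl (rtg_of_mem hm hpmem) hmp
      have hEm' : (1:ℝ)•(w•E m) ∈ Φ := by simpa using hEm
      have h2 := Mflip hsub hcl hmp Sgn.one hw hEm' hM
      refine ⟨m, hm, p, hpmem, hmp,
        allM_of_two hsub hcl hs ht hs.neg ht hM h2 ?_⟩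
      rcases hs with rfl|rfl <;> rcases ht with rfl|rfl <;> norm_num
    rcases hty with h|h|h
    · obtain ⟨m, hm, hEm⟩ := h
      exact gen 1 (Or.inl rfl) m hm (by simpa using hEm)
    · obtain ⟨m, hm, hEm⟩ := h
      exact gen 2 (Or.inr rfl) m hm hEm
    · obtain ⟨a, ha, b, hb, hab, ⟨s,t,hs,ht,hst,hM1⟩, ⟨u,v,hu,hv,huv,hM2⟩⟩ := h
      exact ⟨a, ha, b, hb, hab,
        allM_of_two hsub hcl hs ht hu hv hM1 hM2 (by rw [hst, huv]; norm_num)⟩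
  obtain ⟨a, ha, b, hb, hab, hall⟩ := hpair
  exact spread hsub hcl ha hb hab hall hk hl hkl

/-- short/long roots propagate through a block (`w = 1` short, `w = 2` long). -/
lemma sw_all {w : ℝ} {i k : Fin n} (hw : w = 1 ∨ w = 2)
    (h : ∃ m ∈ blkΦ Φ i, w • E m ∈ Φ) (hk : k ∈ blkΦ Φ i) :
    w • E k ∈ Φ ∧ -(w • E k) ∈ Φ := by
  obtain ⟨m, hm, hEm⟩ := h
  have hrtg : Relation.ReflTransGen (r' Φ) m k := rtg_of_mem hm hk
  have key : w • E k ∈ Φ := by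
    clear hk hm
    induction hrtg with
    | refl => exact hEm
    | @tail b c hab hbc ih =>
      obtain ⟨hbc', u, v, hu, hv, hM⟩ := hbc
      have h1 : (1:ℝ) • (w • E b) ∈ Φ := by simpa using ih
      have h2 := Sstep hsub hcl hbc' hu hv h1 hM
      exact (sw_mem hsub hcl (((Sgn.one.mul hu).mul hv).neg) h2).1
  exact ⟨key, neg_mem hsub hcl key⟩

omit hcl in
lemma cls_unique {i k l : Fin n} {s t u v : ℝ} (hnb : ¬hasBoth Φ (blkΦ Φ i))
    (hk : k ∈ blkΦ Φ i) (hl : l ∈ blkΦ Φ i) (hkl : k ≠ l)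
    (hs : Sgn s) (ht : Sgn t) (hu : Sgn u) (hv : Sgn v)
    (h1 : M Φ s t k l) (h2 : M Φ u v k l) : s * t = u * v := by
  by_contra hne
  rcases sgn_cases (hs.mul ht) (hu.mul hv) with he|he
  · exact hne he
  · apply hnb
    rcases (hu.mul hv) with huv|huv
    · exact ⟨k, hk, l, hl, hkl, ⟨u, v, hu, hv, huv, h2⟩,
        ⟨s, t, hs, ht, by rw [he, huv], h1⟩⟩
    · exact ⟨k, hk, l, hl, hkl, ⟨s, t, hs, ht, by rw [he, huv]; norm_num, h1⟩,
        ⟨u, v, hu, hv, huv, h2⟩⟩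

omit hcl in
lemma epsval {i : Fin n} {u v : ℝ} (hnb : ¬hasBoth Φ (blkΦ Φ i))
    (hib : i ≠ baseΦ Φ i) (hu : Sgn u) (hv : Sgn v)
    (hM : M Φ u v (baseΦ Φ i) i) : eps Φ i = -(u*v) := by
  classical
  have hbmem := base_mem Φ i
  have hbne : baseΦ Φ i ≠ i := fun h => hib h.symm
  unfold eps
  rw [if_neg hib]
  rcases hu.mul hv with huv|huv
  · have hnc : ¬ Cls Φ (-1) (baseΦ Φ i) i := by
      rintro ⟨s, t, hs, ht, hst, hM'⟩
      have := cls_unique hsub hnb hbmem (self_mem_blk Φ i) hbne hu hv hs ht hM hM'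
      rw [huv, hst] at this
      norm_num at this
    rw [if_neg hnc, huv]
  · rw [if_pos ⟨u, v, hu, hv, huv, hM⟩, huv]
    norm_num

/-- the key sign computation for type-A blocks -/
lemma epsA {k l : Fin n} {s t : ℝ} (hnb : ¬hasBoth Φ (blkΦ Φ k))
    (hl : l ∈ blkΦ Φ k) (hkl : k ≠ l) (hs : Sgn s) (ht : Sgn t)
    (hM : M Φ s t k l) : (eps Φ k * s) * (eps Φ l * t) = -1 := by
  classical
  set b := baseΦ Φ k with hbdef
  have hbl : baseΦ Φ l = b := base_eq hl
  have hblk : blkΦ Φ l = blkΦ Φ k := blk_eq hl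
  have hbmem : b ∈ blkΦ Φ k := base_mem Φ k
  by_cases hkb : k = b
  · -- k is the base point
    have hepsk : eps Φ k = 1 := by unfold eps; rw [if_pos (hkb.trans hbdef)]
    have hlb : l ≠ b := fun h => hkl (hkb.trans h.symm)
    have hMb : M Φ s t b l := hkb ▸ hM
    have hepsl : eps Φ l = -(s*t) := by
      have := epsval hsub (hblk ▸ hnb) (hbl ▸ hlb) hs ht (hbl.symm ▸ hMb)
      exact this
    rw [hepsk, hepsl]
    rcases hs with rfl|rfl <;> rcases ht with rfl|rfl <;> norm_num
  · by_cases hlb : l = b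
    · have hepsl : eps Φ l = 1 := by
        unfold eps; rw [if_pos (hlb.trans hbl.symm)]
      have hM' : M Φ t s b k := by
        rw [← hlb]
        rwa [M, add_comm] at hM
      have hepsk : eps Φ k = -(t*s) := epsval hsub hnb hkb ht hs hM'
      rw [hepsk, hepsl]
      rcases hs with rfl|rfl <;> rcases ht with rfl|rfl <;> norm_num
    · -- neither endpoint is the base point
      obtain ⟨u, v, hu, hv, hMbk⟩ :=
        direct hsub hcl (rtg_of_mem hbmem (self_mem_blk Φ k)) (fun h => hkb h.symm)
      have hepsk : eps Φ k = -(u*v) := epsval hsub hnb hkb hu hv hMbk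
      have hbl' : b ≠ l := fun h => hlb h.symm
      have hMbl : M Φ u (-(v*s*t)) b l :=
        Mtrans hsub hcl (fun h => hkb h.symm) hkl hbl' hs ht hMbk hM
      have hepsl : eps Φ l = -(u*(-(v*s*t))) := by
        refine epsval hsub (hblk ▸ hnb) (hbl ▸ hlb) hu ((hv.mul hs).mul ht).neg ?_
        rw [hbl]; exact hMbl
      rw [hepsk, hepsl]
      rcases hs with rfl|rfl <;> rcases ht with rfl|rfl <;>
        rcases hu with rfl|rfl <;> rcases hv with rfl|rfl <;> norm_num

end main

/-! ### the sign-change map -/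

def Dm (ε : Fin n → ℝ) (v : Fin n → ℝ) : Fin n → ℝ := fun j => ε j * v j

lemma Dm_mixed (ε : Fin n → ℝ) (s t : ℝ) (i j : Fin n) :
    Dm ε (s•E i + t•E j) = (ε i * s)•E i + (ε j * t)•E j := by
  funext m
  simp only [Dm, Pi.add_apply, Pi.smul_apply, E_apply, smul_eq_mul]
  split_ifs <;> simp_all <;> ring

lemma Dm_single (ε : Fin n → ℝ) (s w : ℝ) (i : Fin n) :
    Dm ε (s•(w•E i)) = (ε i * s)•(w•E i) := by
  funext m
  simp only [Dm, Pi.smul_apply, E_apply, smul_eq_mul]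
  split_ifs <;> simp_all <;> ring

lemma Dm_invol {ε : Fin n → ℝ} (hε : ∀ i, Sgn (ε i)) (v : Fin n → ℝ) :
    Dm ε (Dm ε v) = v := by
  funext m
  simp only [Dm]
  rcases hε m with h|h <;> rw [h] <;> ring

lemma sw_mem_all {w σ : ℝ} {k : Fin n} (h1 : w•E k ∈ Φ) (h2 : -(w•E k) ∈ Φ)
    (hσ : Sgn σ) : σ•(w•E k) ∈ Φ := by
  rcases hσ with rfl|rfl
  · rwa [one_smul]
  · rwa [neg_one_smul]

end S9

open S9

/-- Classification: up to sign changes, every root subsystem of `BC_n` is a disjoint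
union of classical systems on the blocks of a partition of the indices. -/
theorem stmt9 (n : ℕ) (hn : 1 ≤ n) (Φ : Set (Fin n → ℝ)) (hsub : Φ ⊆ BCset n)
    (hcl : ∀ α ∈ Φ, ∀ β ∈ Φ, reflRoot α β ∈ Φ) :
    ∃ (ε : Fin n → ℝ) (blk : Fin n → Finset (Fin n)) (t : Finset (Fin n) → RType),
      (∀ i, ε i = 1 ∨ ε i = -1) ∧
      (∀ i, i ∈ blk i) ∧ (∀ i j, j ∈ blk i → blk j = blk i) ∧
      (fun v : Fin n → ℝ => fun j => ε j * v j) '' Φ =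
        ⋃ i, PhiOf (t (blk i)) (blk i) := by
  refine ⟨eps Φ, blkΦ Φ, tfun Φ, eps_sgn Φ, self_mem_blk Φ, fun i j h => blk_eq h, ?_⟩
  have hDm : (fun v : Fin n → ℝ => fun j => eps Φ j * v j) = Dm (eps Φ) := rfl
  rw [hDm]
  ext α
  constructor
  · rintro ⟨β, hβ, rfl⟩
    rcases bc_cases (hsub hβ) with ⟨s,i,hs,rfl⟩ | ⟨s,i,hs,rfl⟩ | ⟨s,t,i,j,hs,ht,hij,rfl⟩
    · -- short root at i
      have hmem := sw_mem hsub hcl hs hβ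
      have hshort : hasShort Φ (blkΦ Φ i) :=
        ⟨i, self_mem_blk Φ i, by simpa using hmem.1⟩
      refine Set.mem_iUnion.2 ⟨i, ?_⟩
      rw [Dm_single]
      have hform : ∀ T : Finset (Fin n),
          i ∈ T → (eps Φ i * s)•((1:ℝ)•E i) ∈ ({α | ∃ k ∈ T, α = E k ∨ α = -E k} : Set _) := by
        intro T hT
        refine ⟨i, hT, ?_⟩
        rcases (eps_sgn Φ i).mul hs with h|h
        · exact Or.inl (by rw [h]; module)
        · exact Or.inr (by rw [h]; module)
      rcases tfun_spec Φ (blkΦ Φ i) with ⟨hT,hns,-⟩|⟨hT,hns,-⟩|⟨hT,-,-⟩|⟨hT,hns,-⟩|⟨hT,-,-⟩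
      · exact absurd hshort hns
      · exact absurd hshort hns
      · rw [hT]
        exact Set.mem_union_right _ (hform _ (self_mem_blk Φ i))
      · exact absurd hshort hns
      · rw [hT]
        exact Set.mem_union_left _ (Set.mem_union_right _ (hform _ (self_mem_blk Φ i)))
    · -- long root at i
      have hmem := sw_mem hsub hcl hs hβ
      have hlong : hasLong Φ (blkΦ Φ i) := ⟨i, self_mem_blk Φ i, hmem.1⟩
      refine Set.mem_iUnion.2 ⟨i, ?_⟩
      rw [Dm_single]
      have hform : ∀ T : Finset (Fin n),
          i ∈ T → (eps Φ i * s)•((2:ℝ)•E i) ∈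
            ({α | ∃ k ∈ T, α = (2:ℝ) • E k ∨ α = -((2:ℝ) • E k)} : Set _) := by
        intro T hT
        refine ⟨i, hT, ?_⟩
        rcases (eps_sgn Φ i).mul hs with h|h
        · exact Or.inl (by rw [h]; module)
        · exact Or.inr (by rw [h]; module)
      rcases tfun_spec Φ (blkΦ Φ i) with ⟨hT,-,hnl,-⟩|⟨hT,-,hnl,-⟩|⟨hT,-,hnl⟩|⟨hT,-,-⟩|⟨hT,-,-⟩
      · exact absurd hlong hnl
      · exact absurd hlong hnl
      · exact absurd hlong hnl
      · rw [hT]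
        exact Set.mem_union_right _ (hform _ (self_mem_blk Φ i))
      · rw [hT]
        exact Set.mem_union_right _ (Set.mem_union_right _ (hform _ (self_mem_blk Φ i)))
    · -- mixed root on (i,j)
      have hj : j ∈ blkΦ Φ i := mem_blk.2 (.single ⟨hij, s, t, hs, ht, hβ⟩)
      refine Set.mem_iUnion.2 ⟨i, ?_⟩
      rw [Dm_mixed]
      have ha := (eps_sgn Φ i).mul hs
      have hb := (eps_sgn Φ j).mul ht
      have hD : (eps Φ i * s)•E i + (eps Φ j * t)•E j ∈ PhiD (blkΦ Φ i) := by
        rcases ha with h1|h1 <;> rcases hb with h2|h2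
        · exact ⟨i, self_mem_blk Φ i, j, hj, hij, Or.inr (Or.inl (by rw [h1,h2]; module))⟩
        · exact ⟨i, self_mem_blk Φ i, j, hj, hij, Or.inl (by rw [h1,h2]; module)⟩
        · exact ⟨j, hj, i, self_mem_blk Φ i, hij.symm, Or.inl (by rw [h1,h2]; module)⟩
        · exact ⟨i, self_mem_blk Φ i, j, hj, hij, Or.inr (Or.inr (by rw [h1,h2]; module))⟩
      rcases tfun_spec Φ (blkΦ Φ i) with ⟨hT,-,-,hnb⟩|⟨hT,-⟩|⟨hT,-⟩|⟨hT,-⟩|⟨hT,-⟩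
      · -- type A : use the sign computation
        rw [hT]
        have hprod := epsA hsub hcl hnb hj hij hs ht hβ
        rcases ha with h1|h1 <;> rcases hb with h2|h2
        · rw [h1, h2] at hprod; norm_num at hprod
        · exact ⟨i, self_mem_blk Φ i, j, hj, hij, by rw [h1,h2]; module⟩
        · exact ⟨j, hj, i, self_mem_blk Φ i, hij.symm, by rw [h1,h2]; module⟩
        · rw [h1, h2] at hprod; norm_num at hprod
      · rw [hT]; exact hD
      · rw [hT]; exact Set.mem_union_left _ hD
      · rw [hT]; exact Set.mem_union_left _ hD
      · rw [hT]; exact Set.mem_union_left _ (Set.mem_union_left _ hD)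
  · intro hα
    obtain ⟨i, hi⟩ := Set.mem_iUnion.1 hα
    suffices h : Dm (eps Φ) α ∈ Φ by
      exact ⟨Dm (eps Φ) α, h, Dm_invol (eps_sgn Φ) α⟩
    -- helpers
    have hDmem : ∀ k l : Fin n, k ∈ blkΦ Φ i → l ∈ blkΦ Φ i →
        (hasShort Φ (blkΦ Φ i) ∨ hasLong Φ (blkΦ Φ i) ∨ hasBoth Φ (blkΦ Φ i)) →
        α ∈ PhiD (blkΦ Φ i) → Dm (eps Φ) α ∈ Φ := by
      intro _ _ _ _ hty hPhiD
      obtain ⟨k, hk, l, hl, hkl, hform⟩ := hPhiD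
      have hall := fullD hsub hcl hty hk hl hkl
      rcases hform with rfl|rfl|rfl
      · rw [show E k - E l = (1:ℝ)•E k + (-1:ℝ)•E l by module, Dm_mixed]
        exact hall _ _ ((eps_sgn Φ k).mul Sgn.one) ((eps_sgn Φ l).mul Sgn.negone)
      · rw [show E k + E l = (1:ℝ)•E k + (1:ℝ)•E l by module, Dm_mixed]
        exact hall _ _ ((eps_sgn Φ k).mul Sgn.one) ((eps_sgn Φ l).mul Sgn.one)
      · rw [show -(E k + E l) = (-1:ℝ)•E k + (-1:ℝ)•E l by module, Dm_mixed]
        exact hall _ _ ((eps_sgn Φ k).mul Sgn.negone) ((eps_sgn Φ l).mul Sgn.negone)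
    have hShortmem : hasShort Φ (blkΦ Φ i) →
        α ∈ ({α | ∃ k ∈ blkΦ Φ i, α = E k ∨ α = -E k} : Set _) → Dm (eps Φ) α ∈ Φ := by
      rintro hS ⟨k, hk, (rfl|rfl)⟩ <;>
        [rw [show E k = (1:ℝ)•((1:ℝ)•E k) by module, Dm_single];
         rw [show -E k = (-1:ℝ)•((1:ℝ)•E k) by module, Dm_single]] <;>
      · obtain ⟨m, hm, hEm⟩ := hS
        have hsl := sw_all hsub hcl (Or.inl rfl) ⟨m, hm, by simpa using hEm⟩ hk
        exact sw_mem_all hsl.1 hsl.2 ((eps_sgn Φ k).mul (by simp [Sgn]))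
    have hLongmem : hasLong Φ (blkΦ Φ i) →
        α ∈ ({α | ∃ k ∈ blkΦ Φ i, α = (2:ℝ)•E k ∨ α = -((2:ℝ)•E k)} : Set _) →
        Dm (eps Φ) α ∈ Φ := by
      rintro hS ⟨k, hk, (rfl|rfl)⟩ <;>
        [rw [show (2:ℝ)•E k = (1:ℝ)•((2:ℝ)•E k) by module, Dm_single];
         rw [show -((2:ℝ)•E k) = (-1:ℝ)•((2:ℝ)•E k) by module, Dm_single]] <;>
      · obtain ⟨m, hm, hEm⟩ := hS
        have hsl := sw_all hsub hcl (Or.inr rfl) ⟨m, hm, hEm⟩ hk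
        exact sw_mem_all hsl.1 hsl.2 ((eps_sgn Φ k).mul (by simp [Sgn]))
    rcases tfun_spec Φ (blkΦ Φ i) with
      ⟨hT,-,-,hnb⟩|⟨hT,-,-,hboth⟩|⟨hT,hshort,-⟩|⟨hT,-,hlong⟩|⟨hT,hshort,hlong⟩ <;> rw [hT] at hi
    · -- type A
      obtain ⟨k, hk, l, hl, hkl, rfl⟩ := hi
      rw [show E k - E l = (1:ℝ)•E k + (-1:ℝ)•E l by module, Dm_mixed]
      have hl' : l ∈ blkΦ Φ k := by rw [blk_eq hk]; exact hl
      have hnb' : ¬hasBoth Φ (blkΦ Φ k) := by rw [blk_eq hk]; exact hnb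
      obtain ⟨u, v, hu, hv, hM⟩ :=
        direct hsub hcl (rtg_of_mem (self_mem_blk Φ k) hl') hkl
      have hprod := epsA hsub hcl hnb' hl' hkl hu hv hM
      refine Msame hsub hcl hM hu hv ((eps_sgn Φ k).mul Sgn.one)
        ((eps_sgn Φ l).mul Sgn.negone) ?_
      rcases eps_sgn Φ k with h1|h1 <;> rcases eps_sgn Φ l with h2|h2 <;>
        rcases hu with rfl|rfl <;> rcases hv with rfl|rfl <;>
        rw [h1, h2] at hprod ⊢ <;> norm_num at hprod <;> norm_num
    · exact hDmem i i (self_mem_blk Φ i) (self_mem_blk Φ i) (Or.inr (Or.inr hboth)) hi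
    · rcases hi with hi|hi
      · exact hDmem i i (self_mem_blk Φ i) (self_mem_blk Φ i) (Or.inl hshort) hi
      · exact hShortmem hshort hi
    · rcases hi with hi|hi
      · exact hDmem i i (self_mem_blk Φ i) (self_mem_blk Φ i) (Or.inr (Or.inl hlong)) hi
      · exact hLongmem hlong hi
    · rcases hi with (hi|hi)|(hi|hi)
      · exact hDmem i i (self_mem_blk Φ i) (self_mem_blk Φ i) (Or.inl hshort) hi
      · exact hShortmem hshort hi
      · exact hDmem i i (self_mem_blk Φ i) (self_mem_blk Φ i) (Or.inl hshort) hi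
      · exact hLongmem hlong hi
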